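/- (Corollary to Lemma 1) For all 1 ≤ k ≤ j < i ≤ d one has P_k a_i^{(j+1)} = a_i^{(j+1)}. -/
import Mathlib


/-- **Corollary to Lemma 1.** For `1 ≤ k ≤ j < i ≤ d`,
`P k * aᵢ⁽ʲ⁺¹⁾ = aᵢ⁽ʲ⁺¹⁾`. -/
theorem P_mul_a_corollary {A : Type*} [CStarAlgebra A] [PartialOrder A] [StarOrderedRing A]
    {d : ℕ} (hd : 0 < d) {μ : ℝ} (hμ₁ : -1 < μ) (hμ₂ : μ < 1)
    (t T P : ℕ → A) (a : ℕ → ℕ → A)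
    (rel1 : ∀ i j, 1 ≤ i → i ≤ d → 1 ≤ j → j ≤ d → i ≠ j → star (t i) * t j = 0)
    (rel2 : ∀ i, 1 ≤ i → i ≤ d →
      star (t i) * t i = 1 - ∑ k ∈ Finset.Ico 1 i, t k * star (t k))
    (rel3 : ∀ i j, 1 ≤ i → i < j → j ≤ d → t j * t i = 0)
    (hP : ∀ j, P j = 1 - ∑ k ∈ Finset.Icc 1 j, t k * star (t k))
    (hTpos : ∀ i, 1 ≤ i → i ≤ d → 0 ≤ T i)
    (hTsq : ∀ i, 1 ≤ i → i ≤ d →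
      HasSum (fun n : ℕ => μ ^ (2 * n) • ((t i) ^ (n + 1) * star ((t i) ^ (n + 1))))
        (T i ^ 2))
    (haii : ∀ i, 1 ≤ i → i ≤ d → a i i = T i * t i)
    (haij : ∀ i j, 1 ≤ j → j < i → i ≤ d →
      HasSum (fun n : ℕ => μ ^ n • ((t j) ^ n * a i (j + 1) * star ((t j) ^ n)))
        (a i j)) :
    ∀ i j k, 1 ≤ k → k ≤ j → j < i → i ≤ d → P k * a i (j + 1) = a i (j + 1) := by
  intro i j k hk hkj hji hid
  -- Key claim: for all `1 ≤ m < j' ≤ i`, `star (t m) * a i j' = 0`.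
  have key : ∀ c j', j' + c = i → ∀ m, 1 ≤ m → m < j' → star (t m) * a i j' = 0 := by
    intro c
    induction c with
    | zero =>
      intro j' hj' m hm1 hmj'
      simp only [Nat.add_zero] at hj'
      subst hj'
      have hj'1 : 1 ≤ j' := le_of_lt (lt_of_le_of_lt hm1 hmj')
      rw [haii j' hj'1 hid]
      have ht : star (t m) * t j' = 0 :=
        rel1 m j' hm1 (by omega) hj'1 hid (by omega)
      -- first: star (t m) * (T j')^2 = 0
      have hTT : star (t m) * T j' ^ 2 = 0 := by
        have h1 := (hTsq j' hj'1 hid).mul_left (star (t m))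
        have h2 : (fun n : ℕ => star (t m) *
            (μ ^ (2 * n) • (t j' ^ (n + 1) * star (t j' ^ (n + 1))))) = fun _ => 0 := by
          funext n
          simp [pow_succ', mul_smul_comm, ← mul_assoc, ht]
        rw [h2] at h1
        exact (h1.unique hasSum_zero).symm ▸ (h1.unique hasSum_zero)
      have hsa : star (T j') = T j' :=
        (IsSelfAdjoint.of_nonneg (hTpos j' hj'1 hid)).star_eq
      have hxz : star (t m) * T j' = 0 := by
        have hns := CStarRing.norm_self_mul_star (x := star (t m) * T j')
        have hcalc : (star (t m) * T j') * star (star (t m) * T j') = 0 := by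
          rw [star_mul, star_star, hsa]
          calc star (t m) * T j' * (T j' * t m)
              = (star (t m) * T j' ^ 2) * t m := by
                rw [sq]; simp only [mul_assoc]
            _ = 0 := by rw [hTT, zero_mul]
        rw [hcalc, norm_zero] at hns
        have : ‖star (t m) * T j'‖ = 0 := by nlinarith [norm_nonneg (star (t m) * T j')]
        exact norm_eq_zero.mp this
      rw [← mul_assoc, hxz, zero_mul]
    | succ c ih =>
      intro j' hj' m hm1 hmj'
      have hj'1 : 1 ≤ j' := le_of_lt (lt_of_le_of_lt hm1 hmj')
      have hj'i : j' < i := by omega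
      have hs := (haij i j' hj'1 hj'i hid).mul_left (star (t m))
      have hzero : (fun n : ℕ => star (t m) *
          (μ ^ n • (t j' ^ n * a i (j' + 1) * star (t j' ^ n)))) = fun _ => 0 := by
        funext n
        cases n with
        | zero =>
          have h0 := ih (j' + 1) (by omega) m hm1 (by omega)
          simp [mul_smul_comm, ← mul_assoc, h0]
        | succ n =>
          have ht : star (t m) * t j' = 0 :=
            rel1 m j' hm1 (by omega) hj'1 (by omega) (by omega)
          simp [pow_succ', mul_smul_comm, ← mul_assoc, ht]
      rw [hzero] at hs
      exact hs.unique hasSum_zero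
  -- now conclude
  have hsum : ∑ m ∈ Finset.Icc 1 k, t m * star (t m) * a i (j + 1) = 0 := by
    refine Finset.sum_eq_zero fun m hm => ?_
    obtain ⟨h1, h2⟩ := Finset.mem_Icc.mp hm
    rw [mul_assoc, key (i - (j + 1)) (j + 1) (by omega) m h1 (by omega), mul_zero]
  rw [hP k, sub_mul, one_mul, Finset.sum_mul, hsum, sub_zero]
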